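/- For every complex s with Re(s) > 3/2, the series ∑_{n=0}^∞ binom(1/2, n)·(-1)^n/(3/2 - n - s) converges absolutely and equals (√π/2)·Γ(s - 1/2)/((3/2 - s)·Γ(s)). -/

import Mathlib

open Complex MeasureTheory

/-- The generalized binomial coefficient `(1/2 choose n)` as a complex number. -/

noncomputable def halfChoose (n : ℕ) : ℂ :=
  (∏ i ∈ Finset.range n, ((1 : ℂ)/2 - i)) / (n.factorial : ℂ)

/-- real version of `halfChoose n * (-1)^n` -/
noncomputable def bcoef (n : ℕ) : ℝ :=
  (∏ i ∈ Finset.range n, ((1 : ℝ)/2 - i)) / (n.factorial : ℝ) * (-1)^n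

lemma halfChoose_eq (n : ℕ) : halfChoose n * (-1)^n = (bcoef n : ℂ) := by
  simp only [halfChoose, bcoef]
  push_cast
  ring

lemma bcoef_zero : bcoef 0 = 1 := by simp [bcoef]

lemma bcoef_one : bcoef 1 = -(1/2) := by
  simp [bcoef]

lemma bcoef_succ (n : ℕ) : 2*((n:ℝ)+1) * bcoef (n+1) = (2*(n:ℝ) - 1) * bcoef n := by
  have h1 : (n.factorial : ℝ) ≠ 0 := Nat.cast_ne_zero.mpr n.factorial_ne_zero
  have h2 : (n:ℝ) + 1 ≠ 0 := by positivity
  simp only [bcoef, Finset.prod_range_succ, Nat.factorial_succ, pow_succ]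
  push_cast
  field_simp
  ring

lemma bcoef_succ' (n : ℕ) : bcoef (n+1) = (2*(n:ℝ) - 1)/(2*((n:ℝ)+1)) * bcoef n := by
  have h2 : 2*((n:ℝ) + 1) ≠ 0 := by positivity
  field_simp
  linarith [bcoef_succ n]

lemma abs_bcoef_le_one (n : ℕ) : |bcoef n| ≤ 1 := by
  induction n with
  | zero => simp [bcoef_zero]
  | succ n ih =>
    rw [bcoef_succ', abs_mul, abs_div]
    have h1 : |2*(n:ℝ) - 1| ≤ |2*((n:ℝ)+1)| := by
      have hn : (0:ℝ) ≤ n := Nat.cast_nonneg n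
      rw [abs_of_pos (a := 2*((n:ℝ)+1)) (by positivity), abs_le]
      constructor <;> linarith
    have h2 : (0:ℝ) < |2*((n:ℝ)+1)| := by positivity
    calc |2*(n:ℝ) - 1| / |2*((n:ℝ)+1)| * |bcoef n|
        ≤ 1 * 1 := by
          apply mul_le_mul _ ih (abs_nonneg _) zero_le_one
          rw [div_le_one h2]; exact h1
      _ = 1 := by ring

lemma bcoef_nonpos {n : ℕ} (hn : 1 ≤ n) : bcoef n ≤ 0 := by
  induction n, hn using Nat.le_induction with
  | base => rw [bcoef_one]; norm_num
  | succ n hn ih =>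
    rw [bcoef_succ']
    apply mul_nonpos_of_nonneg_of_nonpos _ ih
    apply div_nonneg _ (by positivity)
    have : (1:ℝ) ≤ n := by exact_mod_cast hn
    linarith

lemma sum_bcoef (N : ℕ) : ∑ n ∈ Finset.range N, bcoef n = -2*(N:ℝ)*bcoef N := by
  induction N with
  | zero => simp
  | succ N ih =>
    rw [Finset.sum_range_succ, ih]
    have := bcoef_succ N
    push_cast
    linarith

lemma summable_abs_bcoef : Summable (fun n => |bcoef n|) := by
  apply summable_of_sum_range_le (fun n => abs_nonneg _) (c := 2)
  intro N
  have key : ∀ n, |bcoef n| = (if n = 0 then (2:ℝ) else 0) - bcoef n := by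
    intro n
    match n with
    | 0 => simp [bcoef_zero]; norm_num
    | (m+1) =>
      simp only [Nat.succ_ne_zero, if_false, zero_sub]
      rw [abs_of_nonpos (bcoef_nonpos (Nat.succ_le_succ (Nat.zero_le m)))]
  calc ∑ n ∈ Finset.range N, |bcoef n|
      = (∑ n ∈ Finset.range N, if n = 0 then (2:ℝ) else 0)
        - ∑ n ∈ Finset.range N, bcoef n := by
        rw [← Finset.sum_sub_distrib]
        exact Finset.sum_congr rfl (fun n _ => key n)
    _ ≤ 2 - (-2*(N:ℝ)*bcoef N) := by
        rw [sum_bcoef]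
        apply sub_le_sub_right
        rw [Finset.sum_ite_eq' (Finset.range N) 0 (fun _ => (2:ℝ))]
        split <;> norm_num
    _ ≤ 2 := by
        rcases Nat.eq_zero_or_pos N with h | h
        · subst h; simp
        · have h1 : bcoef N ≤ 0 := bcoef_nonpos h
          have h2 : (0:ℝ) ≤ N := Nat.cast_nonneg N
          nlinarith

noncomputable def ccoef (m : ℕ) : ℝ := ∑ k ∈ Finset.range (m+1), bcoef k * bcoef (m-k)

lemma two_S (m : ℕ) :
    2 * ∑ k ∈ Finset.range (m+1), (k:ℝ) * bcoef k * bcoef (m-k) = (m:ℝ) * ccoef m := by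
  have hrefl : ∑ k ∈ Finset.range (m+1), (k:ℝ) * bcoef k * bcoef (m-k)
      = ∑ k ∈ Finset.range (m+1), ((m-k : ℕ):ℝ) * bcoef (m-k) * bcoef k := by
    rw [← Finset.sum_range_reflect (fun k => ((m-k : ℕ):ℝ) * bcoef (m-k) * bcoef k) (m+1)]
    apply Finset.sum_congr rfl
    intro j hj
    have hj' : j ≤ m := Nat.lt_succ_iff.mp (Finset.mem_range.mp hj)
    simp only [Nat.add_sub_cancel]
    rw [Nat.sub_sub_self hj']
  have key : ∀ k ∈ Finset.range (m+1),
      (m:ℝ) * (bcoef k * bcoef (m-k))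
        = (k:ℝ) * bcoef k * bcoef (m-k) + ((m-k : ℕ):ℝ) * bcoef (m-k) * bcoef k := by
    intro k hk
    have hk' : k ≤ m := Nat.lt_succ_iff.mp (Finset.mem_range.mp hk)
    rw [Nat.cast_sub hk']
    ring
  have hmc : (m:ℝ) * ccoef m
      = (∑ k ∈ Finset.range (m+1), (k:ℝ) * bcoef k * bcoef (m-k))
        + ∑ k ∈ Finset.range (m+1), ((m-k : ℕ):ℝ) * bcoef (m-k) * bcoef k := by
    rw [ccoef, Finset.mul_sum, ← Finset.sum_add_distrib]
    exact Finset.sum_congr rfl key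
  rw [hmc, ← hrefl]
  ring

lemma ccoef_rec (n : ℕ) : ((n:ℝ)+1) * ccoef (n+1) = ((n:ℝ)-1) * ccoef n := by
  have h1 := two_S (n+1)
  have h2 := two_S n
  -- rewrite S (n+1) via index shift
  have h3 : ∑ k ∈ Finset.range (n+2), (k:ℝ) * bcoef k * bcoef (n+1-k)
      = ∑ i ∈ Finset.range (n+1), ((i:ℝ)+1) * bcoef (i+1) * bcoef (n-i) := by
    rw [Finset.sum_range_succ' (fun k => (k:ℝ) * bcoef k * bcoef (n+1-k)) (n+1)]
    simp only [Nat.cast_zero, zero_mul, add_zero, Nat.succ_sub_succ]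
    apply Finset.sum_congr rfl
    intro i _
    push_cast
    ring
  have h4 : ∀ i : ℕ, 2 * (((i:ℝ)+1) * bcoef (i+1) * bcoef (n-i))
      = (2*(i:ℝ) - 1) * bcoef i * bcoef (n-i) := by
    intro i
    linear_combination bcoef (n-i) * bcoef_succ i
  have h5 : 2 * ∑ i ∈ Finset.range (n+1), ((i:ℝ)+1) * bcoef (i+1) * bcoef (n-i)
      = 2 * ∑ i ∈ Finset.range (n+1), (i:ℝ) * bcoef i * bcoef (n-i) - ccoef n := by
    rw [Finset.mul_sum, Finset.sum_congr rfl (fun i _ => h4 i)]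
    rw [ccoef, Finset.mul_sum, ← Finset.sum_sub_distrib]
    exact Finset.sum_congr rfl (fun i _ => by ring)
  have hcast : ((n:ℝ)+1+1) * ccoef (n+1) = ((n+1 : ℕ):ℝ) * ccoef (n+1) + ccoef (n+1) := by
    push_cast; ring
  have : ((n+1:ℕ):ℝ) * ccoef (n+1) = 2 * ∑ i ∈ Finset.range (n+1), ((i:ℝ)+1) * bcoef (i+1) * bcoef (n-i) := by
    rw [← h3, h1]
  rw [h5, h2] at this
  push_cast at this
  linarith


lemma ccoef_zero : ccoef 0 = 1 := by simp [ccoef, bcoef_zero]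

lemma ccoef_one : ccoef 1 = -1 := by
  simp [ccoef, Finset.sum_range_succ, bcoef_zero, bcoef_one]
  norm_num

lemma ccoef_eq_zero {n : ℕ} (hn : 2 ≤ n) : ccoef n = 0 := by
  induction n with
  | zero => omega
  | succ m ih =>
    rcases Nat.lt_or_ge m 2 with hm | hm
    · -- m ≤ 1, n = m+1 = 2 : use rec at m = 1
      have hm1 : m = 1 := by omega
      subst hm1
      have := ccoef_rec 1
      rw [ccoef_one] at this
      norm_num at this
      linarith
    · have := ccoef_rec m
      rw [ih hm] at this
      have hm0 : (0:ℝ) < (m:ℝ) + 1 := by positivity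
      have : ((m:ℝ)+1) * ccoef (m+1) = 0 := by rw [this]; ring
      rcases mul_eq_zero.mp this with h | h
      · exact absurd h (ne_of_gt hm0)
      · exact h

lemma summable_bcoef_pow {x : ℝ} (h0 : 0 ≤ x) (h1 : x < 1) (y : ℝ) (hy : |y| ≤ x) :
    Summable (fun n => ‖bcoef n * y^n‖) := by
  apply Summable.of_nonneg_of_le (fun n => norm_nonneg _) _
    (summable_geometric_of_lt_one h0 h1)
  intro n
  rw [Real.norm_eq_abs, _root_.abs_mul, _root_.abs_pow]
  calc |bcoef n| * |y|^n ≤ 1 * x^n := by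
        apply mul_le_mul (abs_bcoef_le_one n) (pow_le_pow_left₀ (abs_nonneg y) hy n)
          (by positivity) zero_le_one
    _ = x^n := one_mul _

lemma G_sq {y : ℝ} (h0 : 0 ≤ y) (h1 : y < 1) :
    (∑' n, bcoef n * y^n) * (∑' n, bcoef n * y^n) = 1 - y := by
  have hs := summable_bcoef_pow h0 h1 y (by rw [_root_.abs_of_nonneg h0])
  rw [tsum_mul_tsum_eq_tsum_sum_range_of_summable_norm hs hs]
  have hpt : ∀ n, ∑ k ∈ Finset.range (n+1), (bcoef k * y^k) * (bcoef (n-k) * y^(n-k))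
      = ccoef n * y^n := by
    intro n
    rw [ccoef, Finset.sum_mul]
    apply Finset.sum_congr rfl
    intro k hk
    have hk' : k ≤ n := Nat.lt_succ_iff.mp (Finset.mem_range.mp hk)
    have : y^k * y^(n-k) = y^n := by
      rw [← pow_add, Nat.add_sub_cancel' hk']
    calc bcoef k * y^k * (bcoef (n-k) * y^(n-k))
        = bcoef k * bcoef (n-k) * (y^k * y^(n-k)) := by ring
      _ = bcoef k * bcoef (n-k) * y^n := by rw [this]
  rw [tsum_congr hpt]
  have hz : ∀ n ∉ ({0, 1} : Finset ℕ), ccoef n * y^n = 0 := by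
    intro n hn
    simp only [Finset.mem_insert, Finset.mem_singleton] at hn
    push_neg at hn
    rw [ccoef_eq_zero (by omega), zero_mul]
  rw [tsum_eq_sum hz]
  simp [Finset.sum_pair (by norm_num : (0:ℕ) ≠ 1), ccoef_zero, ccoef_one]; ring

lemma hasSum_bcoef {x : ℝ} (h0 : 0 ≤ x) (h1 : x < 1) :
    HasSum (fun n => bcoef n * x^n) (Real.sqrt (1-x)) := by
  have hsum : Summable (fun n => bcoef n * x^n) :=
    (summable_bcoef_pow h0 h1 x (by rw [_root_.abs_of_nonneg h0])).of_norm
  set G : ℝ → ℝ := fun y => ∑' n, bcoef n * y^n with hG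
  have hGc : ContinuousOn G (Set.Icc 0 x) := by
    apply continuousOn_tsum (u := fun n => x^n)
      (fun i => (continuous_const.mul (continuous_pow i)).continuousOn)
      (summable_geometric_of_lt_one h0 h1)
    intro n y hy
    have hy' : |y| ≤ x := by
      rw [_root_.abs_of_nonneg hy.1]; exact hy.2
    rw [Real.norm_eq_abs]; simp only [Pi.mul_apply]; rw [_root_.abs_mul, _root_.abs_pow]
    calc |bcoef n| * |y|^n ≤ 1 * x^n := by
          apply mul_le_mul (abs_bcoef_le_one n) (pow_le_pow_left₀ (abs_nonneg y) hy' n)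
            (by positivity) zero_le_one
      _ = x^n := one_mul _
  have hG0 : G 0 = 1 := by
    rw [hG]
    simp only
    rw [tsum_eq_single 0 (fun n hn => by
      rw [zero_pow hn, mul_zero])]
    simp [bcoef_zero]
  have hGsq : ∀ y, y ∈ Set.Icc 0 x → G y * G y = 1 - y := by
    intro y hy
    exact G_sq hy.1 (lt_of_le_of_lt hy.2 h1)
  have hGx_pos : 0 < G x := by
    rcases lt_trichotomy (G x) 0 with h | h | h
    · exfalso
      have hmem : (0:ℝ) ∈ Set.Icc (G x) (G 0) := by
        constructor
        · exact le_of_lt h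
        · rw [hG0]; norm_num
      obtain ⟨c, hc, hGc0⟩ := intermediate_value_Icc' h0 hGc hmem
      have := hGsq c hc
      rw [hGc0] at this
      have : (1:ℝ) - c = 0 := by linarith
      have hc1 : c ≤ x := hc.2
      linarith
    · exfalso
      have := hGsq x ⟨h0, le_refl x⟩
      rw [h] at this
      have : (1:ℝ) - x = 0 := by linarith
      linarith
    · exact h
  have hGx : G x = Real.sqrt (1-x) := by
    have hsq := hGsq x ⟨h0, le_refl x⟩
    have : Real.sqrt (1-x) = Real.sqrt (G x * G x) := by rw [hsq]
    rw [this, Real.sqrt_mul_self (le_of_lt hGx_pos)]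
  have := hsum.hasSum
  rwa [show ∑' n, bcoef n * x^n = G x from rfl, hGx] at this

/-- For `Re(s) > 3/2`, `∑ binom(1/2,n)(-1)ⁿ/(3/2-n-s)` converges absolutely and equals
`(√π/2)·Γ(s-1/2)/((3/2-s)Γ(s))`. -/
theorem binom_sum_identity (s : ℂ) (hs : 3/2 < s.re) :
    Summable (fun n : ℕ => ‖halfChoose n * (-1)^n / (3/2 - n - s)‖) ∧
    ∑' n : ℕ, halfChoose n * (-1)^n / (3/2 - n - s) =
      (Real.sqrt Real.pi / 2) * Complex.Gamma (s - 1/2) /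
        ((3/2 - s) * Complex.Gamma s) := by
  have hδ : 0 < s.re - 3/2 := by linarith
  -- denominators
  have hDre : ∀ n : ℕ, ((3/2 : ℂ) - n - s).re = 3/2 - n - s.re := by
    intro n; simp [Complex.sub_re, Complex.natCast_re]
  have hDnorm : ∀ n : ℕ, s.re - 3/2 ≤ ‖(3/2 : ℂ) - n - s‖ := by
    intro n
    calc s.re - 3/2 ≤ |((3/2 : ℂ) - n - s).re| := by
          rw [hDre n, abs_sub_comm]
          have h0 : (0:ℝ) ≤ n := Nat.cast_nonneg n
          rw [abs_of_pos (by linarith)]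
          linarith
      _ ≤ ‖(3/2 : ℂ) - n - s‖ := Complex.abs_re_le_norm _
  have hDne : ∀ n : ℕ, (3/2 : ℂ) - n - s ≠ 0 := by
    intro n h
    have := hDnorm n
    rw [h] at this
    simp at this
    linarith
  -- rewrite terms using bcoef
  have hterm : ∀ n : ℕ, halfChoose n * (-1)^n / (3/2 - n - s)
      = (bcoef n : ℂ) / (3/2 - n - s) := by
    intro n; rw [halfChoose_eq]
  -- Part 1: summability of norms
  have hbound : ∀ n : ℕ, ‖(bcoef n : ℂ) / ((3/2 : ℂ) - n - s)‖ ≤ |bcoef n| * (s.re - 3/2)⁻¹ := by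
    intro n
    rw [norm_div, Complex.norm_real, Real.norm_eq_abs]
    rw [div_eq_mul_inv]
    apply mul_le_mul_of_nonneg_left _ (abs_nonneg _)
    apply inv_anti₀ hδ (hDnorm n)
  have hsummable : Summable (fun n : ℕ => ‖halfChoose n * (-1)^n / (3/2 - n - s)‖) := by
    apply Summable.of_nonneg_of_le (fun n => norm_nonneg _) _
      (summable_abs_bcoef.mul_right (s.re - 3/2)⁻¹)
    intro n
    rw [hterm n]
    exact hbound n
  refine ⟨hsummable, ?_⟩
  -- Part 2: the integral computation
  set μ : Measure ℝ := volume.restrict (Set.Ioc (0:ℝ) 1) with hμ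
  set F : ℕ → ℝ → ℂ := fun n y => (bcoef n : ℂ) * (y:ℂ)^((n:ℂ) + s - 5/2) with hF
  have hre : ∀ n : ℕ, ((n:ℂ) + s - 5/2).re = n + s.re - 5/2 := by
    intro n; simp [Complex.add_re, Complex.sub_re, Complex.natCast_re]
  have hre1 : ∀ n : ℕ, (-1 : ℝ) < ((n:ℂ) + s - 5/2).re := by
    intro n
    rw [hre n]
    have : (0:ℝ) ≤ n := Nat.cast_nonneg n
    linarith
  have h_int : ∀ n : ℕ, Integrable (F n) μ := by
    intro n
    have h1 : IntervalIntegrable (fun y:ℝ => (y:ℂ)^((n:ℂ)+s-5/2)) volume 0 1 :=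
      intervalIntegral.intervalIntegrable_cpow' (hre1 n)
    rw [intervalIntegrable_iff_integrableOn_Ioc_of_le zero_le_one] at h1
    exact (h1.const_mul _)
  -- norm integrals
  have h_norm_eval : ∀ n : ℕ, ∫ y, ‖F n y‖ ∂μ
      = |bcoef n| * (1/((n:ℝ) + s.re - 3/2)) := by
    intro n
    rw [hμ]
    have hcongr : ∀ y ∈ Set.Ioc (0:ℝ) 1, ‖F n y‖ = |bcoef n| * y^((n:ℝ) + s.re - 5/2) := by
      intro y hy
      rw [hF]
      simp only
      rw [norm_mul, Complex.norm_real, Real.norm_eq_abs,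
        Complex.norm_cpow_eq_rpow_re_of_pos hy.1, hre n]
    rw [setIntegral_congr_fun measurableSet_Ioc hcongr, MeasureTheory.integral_const_mul,
      ← intervalIntegral.integral_of_le zero_le_one,
      integral_rpow (Or.inl (by have : (0:ℝ) ≤ n := Nat.cast_nonneg n; linarith))]
    have h30 : (0:ℝ) ^ ((n:ℝ) + s.re - 5/2 + 1) = 0 := by
      apply Real.zero_rpow
      have : (0:ℝ) ≤ n := Nat.cast_nonneg n
      intro h
      have h0 : (0:ℝ) ≤ n := Nat.cast_nonneg n
      linarith
    rw [Real.one_rpow, h30]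
    ring_nf
  have h_sum_norm : Summable (fun n => ∫ y, ‖F n y‖ ∂μ) := by
    apply Summable.of_nonneg_of_le
      (fun n => integral_nonneg (fun y => norm_nonneg _)) _
      (summable_abs_bcoef.mul_right (s.re - 3/2)⁻¹)
    intro n
    rw [h_norm_eval n]
    apply mul_le_mul_of_nonneg_left _ (abs_nonneg _)
    rw [one_div]
    apply inv_anti₀ hδ
    have : (0:ℝ) ≤ n := Nat.cast_nonneg n
    linarith
  have key := MeasureTheory.hasSum_integral_of_summable_integral_norm h_int h_sum_norm
  -- evaluate each integral
  have h_eval : ∀ n : ℕ, ∫ y, F n y ∂μ = (bcoef n : ℂ) / ((n:ℂ) + s - 3/2) := by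
    intro n
    rw [hμ, hF]
    simp only
    rw [MeasureTheory.integral_const_mul, ← intervalIntegral.integral_of_le zero_le_one,
      integral_cpow (Or.inl (hre1 n))]
    have hne : (n:ℂ) + s - 5/2 + 1 ≠ 0 := by
      intro h
      have := congrArg Complex.re h
      rw [Complex.add_re, hre n, Complex.one_re, Complex.zero_re] at this
      have h0 : (0:ℝ) ≤ n := Nat.cast_nonneg n
      linarith
    rw [Complex.ofReal_one, Complex.ofReal_zero, Complex.one_cpow, Complex.zero_cpow hne]
    have : (n:ℂ) + s - 5/2 + 1 = (n:ℂ) + s - 3/2 := by ring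
    rw [this]
    ring
  -- the value of the integral of the tsum
  have hb : 0 < (s - 3/2 : ℂ).re := by
    simp [Complex.sub_re]; norm_num; linarith
  have h32 : (0:ℝ) < (3/2 : ℂ).re := by norm_num
  have h_tsum_int : ∫ y, (∑' n, F n y) ∂μ = Complex.betaIntegral (s - 3/2) (3/2) := by
    rw [Complex.betaIntegral, intervalIntegral.integral_of_le zero_le_one, hμ]
    apply setIntegral_congr_ae measurableSet_Ioc
    have hone : ∀ᵐ y : ℝ, y ∉ ({1} : Set ℝ) :=
      MeasureTheory.measure_eq_zero_iff_ae_notMem.mp (measure_singleton 1)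
    filter_upwards [hone] with y hy1' hyIoc
    have hy1 : y ≠ 1 := fun h => hy1' (by simp [h])
    have hy0 : 0 < y := hyIoc.1
    have hy1' : y < 1 := lt_of_le_of_ne hyIoc.2 hy1
    have hyc : (y:ℂ) ≠ 0 := by exact_mod_cast ne_of_gt hy0
    -- split cpow
    have hsplit : ∀ n : ℕ, F n y = ((bcoef n * y^n : ℝ) : ℂ) * (y:ℂ)^(s - 5/2) := by
      intro n
      rw [hF]
      simp only
      have : (n:ℂ) + s - 5/2 = (n:ℂ) + (s - 5/2) := by ring
      rw [this, Complex.cpow_add _ _ hyc, Complex.cpow_natCast]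
      push_cast
      ring
    rw [tsum_congr hsplit, tsum_mul_right, ← Complex.ofReal_tsum]
    rw [(hasSum_bcoef (le_of_lt hy0) hy1').tsum_eq]
    rw [Real.sqrt_eq_rpow, Complex.ofReal_cpow (by linarith : (0:ℝ) ≤ 1 - y)]
    have e1 : ((1 - y : ℝ) : ℂ) = 1 - (y:ℂ) := by push_cast; ring
    have e2 : (((1:ℝ)/2 : ℝ) : ℂ) = (3/2 : ℂ) - 1 := by push_cast; norm_num
    have e3 : s - 3/2 - 1 = s - 5/2 := by ring
    rw [e1, e2, e3]
    ring
  rw [h_tsum_int] at key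
  have key2 : HasSum (fun n : ℕ => (bcoef n : ℂ) / ((n:ℂ) + s - 3/2))
      (Complex.betaIntegral (s - 3/2) (3/2)) := by
    have := key
    rwa [funext h_eval] at this
  -- translate to the original terms
  have hterm2 : ∀ n : ℕ, halfChoose n * (-1)^n / (3/2 - n - s)
      = -((bcoef n : ℂ) / ((n:ℂ) + s - 3/2)) := by
    intro n
    rw [hterm n]
    have : (3/2 : ℂ) - n - s = -((n:ℂ) + s - 3/2) := by ring
    rw [this, div_neg]
  have hfinal : HasSum (fun n : ℕ => halfChoose n * (-1)^n / (3/2 - n - s))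
      (-(Complex.betaIntegral (s - 3/2) (3/2))) := by
    have := key2.neg
    rwa [show (fun n : ℕ => -((bcoef n : ℂ) / ((n:ℂ) + s - 3/2)))
      = (fun n : ℕ => halfChoose n * (-1)^n / (3/2 - n - s)) from funext (fun n => (hterm2 n).symm)] at this
  rw [hfinal.tsum_eq]
  -- Part 3: Gamma algebra
  have hG := Complex.Gamma_mul_Gamma_eq_betaIntegral hb h32
  rw [show s - 3/2 + 3/2 = s by ring] at hG
  have hΓhalf : Complex.Gamma (3/2 : ℂ) = (Real.sqrt Real.pi : ℂ) / 2 := by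
    have h12 : (3/2 : ℂ) = 1/2 + 1 := by norm_num
    rw [h12, Complex.Gamma_add_one _ (by norm_num), Complex.Gamma_one_half_eq]
    rw [show ((1/2 : ℂ)) = (((1/2 : ℝ)) : ℂ) by push_cast; norm_num]
    rw [← Complex.ofReal_cpow Real.pi_nonneg, ← Real.sqrt_eq_rpow]
    push_cast
    ring
  have hΓrec : Complex.Gamma (s - 1/2) = (s - 3/2) * Complex.Gamma (s - 3/2) := by
    have : s - 1/2 = (s - 3/2) + 1 := by ring
    rw [this, Complex.Gamma_add_one _ (by
      intro h
      have := congrArg Complex.re h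
      rw [Complex.zero_re] at this
      rw [this] at hb
      exact lt_irrefl 0 hb)]
  have hΓs : Complex.Gamma s ≠ 0 := Complex.Gamma_ne_zero_of_re_pos (by linarith)
  have h32s : (3/2 : ℂ) - s ≠ 0 := by
    intro h
    have := congrArg Complex.re h
    simp [Complex.sub_re] at this
    norm_num at this
    linarith
  rw [hΓhalf] at hG
  have hB : Complex.betaIntegral (s - 3/2) (3/2)
      = Complex.Gamma (s - 3/2) * ((Real.sqrt Real.pi : ℂ)/2) / Complex.Gamma s := by
    rw [eq_div_iff hΓs]
    linear_combination -hG
  rw [hΓrec, hB, ← neg_div, div_eq_div_iff hΓs (mul_ne_zero h32s hΓs)]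
  ring
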